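/- Assume the N-player Riccati system has a solution (P_1, …, P_N) on [0, T]. Then, viewing P_1(t) as an N×N array of n×n blocks, there exist matrix-valued functions Π_1, Π_2, Π_3, Π_4 : [0,T] → ℝ^{n×n} with Π_1(t), Π_3(t), Π_4(t) symmetric for every t, such that for all t ∈ [0,T]: the (1,1) block of P_1(t) equals Π_1(t); the (1,j) block equals Π_2(t) for every j ≥ 2; the (j,1) block equals Π_2(t)ᵀ for every j ≥ 2; the (j,j) block equals Π_3(t) for every j ≥ 2; and the (j,k) block equals Π_4(t) for all j ≠ k with 2 ≤ j, k ≤ N. -/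

import Mathlib

open Matrix

attribute [local instance] Matrix.normedAddCommGroup Matrix.normedSpace

section CD
variable {E : Type*} [NormedAddCommGroup E] [NormedSpace ℝ E]
variable {α β γ : Type*} [Fintype α] [Fintype β] [Fintype γ]

lemma contDiff_entry {f : E → Matrix α β ℝ} (hf : ContDiff ℝ 1 f) (a : α) (b : β) :
    ContDiff ℝ 1 fun x => f x a b :=
  contDiff_pi.1 (contDiff_pi.1 hf a) b

lemma contDiff_matmul {f : E → Matrix α β ℝ} {g : E → Matrix β γ ℝ}
    (hf : ContDiff ℝ 1 f) (hg : ContDiff ℝ 1 g) :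
    ContDiff ℝ 1 fun x => f x * g x := by
  apply contDiff_pi.2; intro a; apply contDiff_pi.2; intro c
  have h : (fun x => (f x * g x) a c) = fun x => ∑ b, f x a b * g x b c := by
    funext x; exact Matrix.mul_apply
  rw [h]
  exact ContDiff.sum fun b _ => (contDiff_entry hf a b).mul (contDiff_entry hg b c)
end CD


/-- `Â = I_N ⊗ A + (1/N)(𝟙_{N×N} ⊗ G)`, written entrywise. -/
noncomputable def hatA (n N : ℕ) (A G : Matrix (Fin n) (Fin n) ℝ) :
    Matrix (Fin N × Fin n) (Fin N × Fin n) ℝ :=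
  Matrix.of fun p q => (if p.1 = q.1 then A p.2 q.2 else 0) + (1 / (N : ℝ)) * G p.2 q.2

/-- `B_k = e_k ⊗ B`. -/
noncomputable def Bblk (n n1 N : ℕ) (B : Matrix (Fin n) (Fin n1) ℝ) (k : Fin N) :
    Matrix (Fin N × Fin n) (Fin n1) ℝ :=
  Matrix.of fun p c => if p.1 = k then B p.2 c else 0

/-- `K_i = [0,…,0, I_n, 0,…,0] − (1/N)[Γ, …, Γ]` with `I_n` in the `i`-th block. -/
noncomputable def Kblk (n N : ℕ) (Γ : Matrix (Fin n) (Fin n) ℝ) (i : Fin N) :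
    Matrix (Fin n) (Fin N × Fin n) ℝ :=
  Matrix.of fun r q => (if q.1 = i ∧ r = q.2 then (1 : ℝ) else 0) - (1 / (N : ℝ)) * Γ r q.2

/-- `Q_i = K_iᵀ Q K_i` (and `Q_{if} = K_{if}ᵀ Q_f K_{if}` with `Γ_f, Q_f`). -/
noncomputable def Qblk (n N : ℕ) (Q Γ : Matrix (Fin n) (Fin n) ℝ) (i : Fin N) :
    Matrix (Fin N × Fin n) (Fin N × Fin n) ℝ :=
  (Kblk n N Γ i)ᵀ * Q * Kblk n N Γ i

/-- Right-hand side of the `N`-player Riccati system: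
`−(P_i Â + Âᵀ P_i) + P_i Σ_k B_k R⁻¹ B_kᵀ P_k + Σ_k P_k B_k R⁻¹ B_kᵀ P_i
  − P_i B_i R⁻¹ B_iᵀ P_i − Q_i`. -/
noncomputable def riccatiRHS (n n1 N : ℕ) (A G Q Γ : Matrix (Fin n) (Fin n) ℝ)
    (B : Matrix (Fin n) (Fin n1) ℝ) (R : Matrix (Fin n1) (Fin n1) ℝ)
    (P : Fin N → Matrix (Fin N × Fin n) (Fin N × Fin n) ℝ) (i : Fin N) :
    Matrix (Fin N × Fin n) (Fin N × Fin n) ℝ :=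
  -(P i * hatA n N A G + (hatA n N A G)ᵀ * P i)
    + P i * (∑ k, Bblk n n1 N B k * R⁻¹ * (Bblk n n1 N B k)ᵀ * P k)
    + (∑ k, P k * Bblk n n1 N B k * R⁻¹ * (Bblk n n1 N B k)ᵀ) * P i
    - P i * Bblk n n1 N B i * R⁻¹ * (Bblk n n1 N B i)ᵀ * P i
    - Qblk n N Q Γ i

/-- `(P_1, …, P_N)` solves the `N`-player Riccati terminal value problem on `[τ, T]`:
each `P_i` is differentiable on `[τ,T]` with derivative given by the Riccati right-hand
side (entrywise), and `P_i(T) = Q_{if}`. -/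
def IsRiccatiSol (n n1 N : ℕ) (A G Q Qf Γ Γf : Matrix (Fin n) (Fin n) ℝ)
    (B : Matrix (Fin n) (Fin n1) ℝ) (R : Matrix (Fin n1) (Fin n1) ℝ) (τ T : ℝ)
    (P : Fin N → ℝ → Matrix (Fin N × Fin n) (Fin N × Fin n) ℝ) : Prop :=
  (∀ i, ∀ t ∈ Set.Icc τ T, ∀ p q,
      HasDerivWithinAt (fun s => P i s p q)
        (riccatiRHS n n1 N A G Q Γ B R (fun k => P k t) i p q) (Set.Icc τ T) t)
  ∧ ∀ i, P i T = Qblk n N Qf Γf i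


section F
variable (n n1 N : ℕ) (A G Q Γ : Matrix (Fin n) (Fin n) ℝ)
    (B : Matrix (Fin n) (Fin n1) ℝ) (R : Matrix (Fin n1) (Fin n1) ℝ)

lemma contDiff_riccatiF :
    ContDiff ℝ 1 (fun v : Fin N → Matrix (Fin N × Fin n) (Fin N × Fin n) ℝ =>
      fun i => riccatiRHS n n1 N A G Q Γ B R v i) := by
  have hproj : ∀ k, ContDiff ℝ 1
      (fun v : Fin N → Matrix (Fin N × Fin n) (Fin N × Fin n) ℝ => v k) :=
    fun k => contDiff_pi.1 contDiff_id k
  apply contDiff_pi.2; intro i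
  simp only [riccatiRHS]
  exact ((((((contDiff_matmul (hproj i) contDiff_const).add
      (contDiff_matmul contDiff_const (hproj i))).neg).add
      (contDiff_matmul (hproj i)
        (ContDiff.sum fun k _ => contDiff_matmul contDiff_const (hproj k)))).add
      (contDiff_matmul
        (ContDiff.sum fun k _ => contDiff_matmul (contDiff_matmul
          (contDiff_matmul (hproj k) contDiff_const) contDiff_const) contDiff_const)
        (hproj i))).sub
      (contDiff_matmul (contDiff_matmul (contDiff_matmul
        (contDiff_matmul (hproj i) contDiff_const) contDiff_const) contDiff_const)
        (hproj i))).sub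
      contDiff_const
end F

section Uniq
open Set
variable {n n1 N : ℕ} {A G Q Qf Γ Γf : Matrix (Fin n) (Fin n) ℝ}
    {B : Matrix (Fin n) (Fin n1) ℝ} {R : Matrix (Fin n1) (Fin n1) ℝ} {T : ℝ}

theorem riccati_unique
    (P P' : Fin N → ℝ → Matrix (Fin N × Fin n) (Fin N × Fin n) ℝ)
    (hP : IsRiccatiSol n n1 N A G Q Qf Γ Γf B R 0 T P)
    (hP' : IsRiccatiSol n n1 N A G Q Qf Γ Γf B R 0 T P')
    {t : ℝ} (ht : t ∈ Icc (0:ℝ) T) (i : Fin N) : P i t = P' i t := by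
  set F : (Fin N → Matrix (Fin N × Fin n) (Fin N × Fin n) ℝ) →
      (Fin N → Matrix (Fin N × Fin n) (Fin N × Fin n) ℝ) :=
    fun v i => riccatiRHS n n1 N A G Q Γ B R v i with hF
  set f : ℝ → (Fin N → Matrix (Fin N × Fin n) (Fin N × Fin n) ℝ) := fun t i => P i t with hf
  set g : ℝ → (Fin N → Matrix (Fin N × Fin n) (Fin N × Fin n) ℝ) := fun t i => P' i t with hg
  have hcont : ∀ (S : Fin N → ℝ → Matrix (Fin N × Fin n) (Fin N × Fin n) ℝ),
      IsRiccatiSol n n1 N A G Q Qf Γ Γf B R 0 T S →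
      ContinuousOn (fun t i => S i t) (Icc (0:ℝ) T) := by
    intro S hS
    apply continuousOn_pi.2; intro i
    apply continuousOn_pi.2; intro p
    apply continuousOn_pi.2; intro q
    intro s hs
    exact (hS.1 i s hs p q).continuousWithinAt
  have hfc : ContinuousOn f (Icc (0:ℝ) T) := hcont P hP
  have hgc : ContinuousOn g (Icc (0:ℝ) T) := hcont P' hP'
  have hderiv : ∀ (S : Fin N → ℝ → Matrix (Fin N × Fin n) (Fin N × Fin n) ℝ),
      IsRiccatiSol n n1 N A G Q Qf Γ Γf B R 0 T S →
      ∀ s ∈ Ioc (0:ℝ) T,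
        HasDerivWithinAt (fun t i => S i t) (F (fun i => S i s)) (Iic s) s := by
    intro S hS s hs
    have h1 : HasDerivWithinAt (fun t i => S i t) (F (fun i => S i s)) (Icc (0:ℝ) T) s := by
      apply hasDerivWithinAt_pi.2; intro i
      apply hasDerivWithinAt_pi.2; intro p
      apply hasDerivWithinAt_pi.2; intro q
      exact hS.1 i s ⟨le_of_lt hs.1, hs.2⟩ p q
    have h2 := h1.mono (Icc_subset_Icc_right hs.2)
    apply h2.mono_of_mem_nhdsWithin
    have h3 : Ioi (0:ℝ) ∩ Iic s ∈ nhdsWithin s (Iic s) :=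
      Filter.inter_mem (mem_nhdsWithin_of_mem_nhds (Ioi_mem_nhds hs.1)) self_mem_nhdsWithin
    exact Filter.mem_of_superset h3 (fun x hx => ⟨le_of_lt hx.1, hx.2⟩)
  -- bounded images
  have hbd : Bornology.IsBounded (f '' Icc (0:ℝ) T ∪ g '' Icc (0:ℝ) T) :=
    ((isCompact_Icc.image_of_continuousOn hfc).union
      (isCompact_Icc.image_of_continuousOn hgc)).isBounded
  obtain ⟨ρ, hρ⟩ := hbd.subset_closedBall 0
  -- Lipschitz bound on the ball
  have hFc : ContDiff ℝ 1 F := contDiff_riccatiF n n1 N A G Q Γ B R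
  obtain ⟨C, hC⟩ := (isCompact_closedBall (0 :
      Fin N → Matrix (Fin N × Fin n) (Fin N × Fin n) ℝ) ρ).exists_bound_of_continuousOn
    (hFc.continuous_fderiv one_ne_zero).continuousOn
  have hlip : LipschitzOnWith C.toNNReal F (Metric.closedBall 0 ρ) := by
    apply (convex_closedBall (0 : Fin N → Matrix (Fin N × Fin n) (Fin N × Fin n) ℝ) ρ).lipschitzOnWith_of_nnnorm_hasFDerivWithin_le
      (f' := fderiv ℝ F)
      (fun x hx => ((hFc.differentiable one_ne_zero) x).hasFDerivAt.hasFDerivWithinAt)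
    intro x hx
    have := hC x hx
    rw [← NNReal.coe_le_coe]
    exact this.trans (Real.le_coe_toNNReal C)
  have key : EqOn f g (Icc (0:ℝ) T) := by
    apply ODE_solution_unique_of_mem_Icc_left
      (v := fun _ x => F x) (s := fun _ => Metric.closedBall 0 ρ)
      (fun _ _ => hlip) hfc (hderiv P hP)
      (fun s hs => hρ (Or.inl (mem_image_of_mem f ⟨le_of_lt hs.1, hs.2⟩)))
      hgc (hderiv P' hP')
      (fun s hs => hρ (Or.inr (mem_image_of_mem g ⟨le_of_lt hs.1, hs.2⟩)))
    funext j
    show P j T = P' j T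
    rw [hP.2 j, hP'.2 j]
  exact congrFun (key ht) i
end Uniq

section Transp
open Set
variable {n n1 N : ℕ} {A G Q Qf Γ Γf : Matrix (Fin n) (Fin n) ℝ}
    {B : Matrix (Fin n) (Fin n1) ℝ} {R : Matrix (Fin n1) (Fin n1) ℝ} {T : ℝ}

lemma Qblk_transpose (hQ : Qᵀ = Q) (i : Fin N) :
    (Qblk n N Q Γ i)ᵀ = Qblk n N Q Γ i := by
  simp [Qblk, Matrix.transpose_mul, hQ, Matrix.mul_assoc]

lemma riccatiRHS_transpose (hQ : Qᵀ = Q) (hR : Rᵀ = R)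
    (P : Fin N → Matrix (Fin N × Fin n) (Fin N × Fin n) ℝ) (i : Fin N) :
    riccatiRHS n n1 N A G Q Γ B R (fun k => (P k)ᵀ) i
      = (riccatiRHS n n1 N A G Q Γ B R P i)ᵀ := by
  have hRi : (R⁻¹)ᵀ = R⁻¹ := by rw [Matrix.transpose_nonsing_inv, hR]
  simp only [riccatiRHS, Matrix.transpose_add, Matrix.transpose_sub, Matrix.transpose_neg,
    Matrix.transpose_mul, Matrix.transpose_sum, Matrix.transpose_transpose, hRi,
    Qblk_transpose (Γ := Γ) hQ, Matrix.mul_assoc, Finset.mul_sum, Finset.sum_mul]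
  abel
end Transp

section Perm
open Set
variable {n n1 N : ℕ} {A G Q Qf Γ Γf : Matrix (Fin n) (Fin n) ℝ}
    {B : Matrix (Fin n) (Fin n1) ℝ} {R : Matrix (Fin n1) (Fin n1) ℝ} {T : ℝ}

/-- block permutation equivalence -/
def pe (N n : ℕ) (σ : Equiv.Perm (Fin N)) : (Fin N × Fin n) ≃ (Fin N × Fin n) :=
  σ.prodCongr (Equiv.refl _)

@[simp] lemma pe_apply (σ : Equiv.Perm (Fin N)) (p : Fin N × Fin n) :
    pe N n σ p = (σ p.1, p.2) := rfl

lemma hatA_submatrix (σ : Equiv.Perm (Fin N)) :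
    (hatA n N A G).submatrix (pe N n σ) (pe N n σ) = hatA n N A G := by
  ext p q
  simp [hatA, Matrix.submatrix_apply]

lemma Bblk_submatrix (σ : Equiv.Perm (Fin N)) (k : Fin N) :
    (Bblk n n1 N B (σ k)).submatrix (pe N n σ) _root_.id = Bblk n n1 N B k := by
  ext p c
  simp [Bblk, Matrix.submatrix_apply]

lemma Kblk_submatrix (σ : Equiv.Perm (Fin N)) (i : Fin N) :
    (Kblk n N Γ (σ i)).submatrix _root_.id (pe N n σ) = Kblk n N Γ i := by
  ext r q
  simp [Kblk, Matrix.submatrix_apply]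

lemma Qblk_submatrix (σ : Equiv.Perm (Fin N)) (i : Fin N) :
    (Qblk n N Q Γ (σ i)).submatrix (pe N n σ) (pe N n σ) = Qblk n N Q Γ i := by
  rw [Qblk, Matrix.submatrix_mul _ _ (pe N n σ) _root_.id (pe N n σ) Function.bijective_id,
    Matrix.submatrix_mul _ _ (pe N n σ) _root_.id _root_.id Function.bijective_id,
    ← Matrix.transpose_submatrix, Kblk_submatrix, Matrix.submatrix_id_id, Qblk]

lemma submatrix_sum {α β α' β' : Type*} {ι : Type*} (s : Finset ι)
    (f : ι → Matrix α β ℝ) (e₁ : α' → α) (e₂ : β' → β) :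
    (∑ k ∈ s, f k).submatrix e₁ e₂ = ∑ k ∈ s, (f k).submatrix e₁ e₂ := by
  ext p q
  simp [Matrix.submatrix_apply, Matrix.sum_apply]

lemma Bblk_submatrix_t (σ : Equiv.Perm (Fin N)) (k : Fin N) :
    ((Bblk n n1 N B (σ k))ᵀ).submatrix _root_.id (pe N n σ) = (Bblk n n1 N B k)ᵀ := by
  rw [← Matrix.transpose_submatrix, Bblk_submatrix]

lemma hatA_t_submatrix (σ : Equiv.Perm (Fin N)) :
    ((hatA n N A G)ᵀ).submatrix (pe N n σ) (pe N n σ) = (hatA n N A G)ᵀ := by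
  rw [← Matrix.transpose_submatrix, hatA_submatrix]

lemma riccatiRHS_perm (σ : Equiv.Perm (Fin N))
    (P : Fin N → Matrix (Fin N × Fin n) (Fin N × Fin n) ℝ) (i : Fin N) :
    riccatiRHS n n1 N A G Q Γ B R (fun k => (P (σ k)).submatrix (pe N n σ) (pe N n σ)) i
      = (riccatiRHS n n1 N A G Q Γ B R P (σ i)).submatrix (pe N n σ) (pe N n σ) := by
  have hmul : ∀ (M M' : Matrix (Fin N × Fin n) (Fin N × Fin n) ℝ),
      M.submatrix (pe N n σ) (pe N n σ) * M'.submatrix (pe N n σ) (pe N n σ)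
        = (M * M').submatrix (pe N n σ) (pe N n σ) :=
    fun M M' => Matrix.submatrix_mul_equiv M M' _ _ _
  have E1a : (P (σ i)).submatrix (pe N n σ) (pe N n σ) * hatA n N A G
      = (P (σ i) * hatA n N A G).submatrix (pe N n σ) (pe N n σ) := by
    rw [← hmul, hatA_submatrix]
  have E1b : (hatA n N A G)ᵀ * (P (σ i)).submatrix (pe N n σ) (pe N n σ)
      = ((hatA n N A G)ᵀ * P (σ i)).submatrix (pe N n σ) (pe N n σ) := by
    rw [← hmul, hatA_t_submatrix]
  have sum1 : (∑ k, Bblk n n1 N B k * (R⁻¹ * ((Bblk n n1 N B k)ᵀ *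
        (P (σ k)).submatrix (pe N n σ) (pe N n σ))))
      = (∑ k, Bblk n n1 N B k * (R⁻¹ * ((Bblk n n1 N B k)ᵀ * P k))).submatrix
          (pe N n σ) (pe N n σ) := by
    rw [submatrix_sum, ← Equiv.sum_comp σ (fun k =>
      (Bblk n n1 N B k * (R⁻¹ * ((Bblk n n1 N B k)ᵀ * P k))).submatrix (pe N n σ) (pe N n σ))]
    refine Finset.sum_congr rfl fun k _ => ?_
    rw [Matrix.submatrix_mul _ _ _ _root_.id _ Function.bijective_id,
      Matrix.submatrix_mul _ _ _ _root_.id _ Function.bijective_id,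
      Matrix.submatrix_mul _ _ _ (⇑(pe N n σ)) _ (pe N n σ).bijective,
      Bblk_submatrix, Bblk_submatrix_t, Matrix.submatrix_id_id]
  have sum2 : (∑ k, (P (σ k)).submatrix (pe N n σ) (pe N n σ) *
        (Bblk n n1 N B k * (R⁻¹ * (Bblk n n1 N B k)ᵀ)))
      = (∑ k, P k * (Bblk n n1 N B k * (R⁻¹ * (Bblk n n1 N B k)ᵀ))).submatrix
          (pe N n σ) (pe N n σ) := by
    rw [submatrix_sum, ← Equiv.sum_comp σ (fun k =>
      (P k * (Bblk n n1 N B k * (R⁻¹ * (Bblk n n1 N B k)ᵀ))).submatrix (pe N n σ) (pe N n σ))]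
    refine Finset.sum_congr rfl fun k _ => ?_
    rw [Matrix.submatrix_mul _ _ _ (⇑(pe N n σ)) _ (pe N n σ).bijective,
      Matrix.submatrix_mul _ _ _ _root_.id _ Function.bijective_id,
      Matrix.submatrix_mul _ _ _ _root_.id _ Function.bijective_id,
      Bblk_submatrix, Bblk_submatrix_t, Matrix.submatrix_id_id]
  have E2 : (P (σ i)).submatrix (pe N n σ) (pe N n σ) *
        (∑ k, Bblk n n1 N B k * (R⁻¹ * ((Bblk n n1 N B k)ᵀ *
          (P (σ k)).submatrix (pe N n σ) (pe N n σ))))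
      = (P (σ i) * ∑ k, Bblk n n1 N B k * (R⁻¹ * ((Bblk n n1 N B k)ᵀ * P k))).submatrix
          (pe N n σ) (pe N n σ) := by
    rw [sum1, hmul]
  have E3 : (∑ k, (P (σ k)).submatrix (pe N n σ) (pe N n σ) *
        (Bblk n n1 N B k * (R⁻¹ * (Bblk n n1 N B k)ᵀ))) *
          (P (σ i)).submatrix (pe N n σ) (pe N n σ)
      = ((∑ k, P k * (Bblk n n1 N B k * (R⁻¹ * (Bblk n n1 N B k)ᵀ))) * P (σ i)).submatrix
          (pe N n σ) (pe N n σ) := by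
    rw [sum2, hmul]
  have E4 : (P (σ i)).submatrix (pe N n σ) (pe N n σ) * (Bblk n n1 N B i *
        (R⁻¹ * ((Bblk n n1 N B i)ᵀ * (P (σ i)).submatrix (pe N n σ) (pe N n σ))))
      = (P (σ i) * (Bblk n n1 N B (σ i) * (R⁻¹ * ((Bblk n n1 N B (σ i))ᵀ * P (σ i))))).submatrix
          (pe N n σ) (pe N n σ) := by
    rw [Matrix.submatrix_mul _ _ _ (⇑(pe N n σ)) _ (pe N n σ).bijective,
      Matrix.submatrix_mul _ _ _ _root_.id _ Function.bijective_id,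
      Matrix.submatrix_mul _ _ _ _root_.id _ Function.bijective_id,
      Matrix.submatrix_mul _ _ _ (⇑(pe N n σ)) _ (pe N n σ).bijective,
      Bblk_submatrix, Bblk_submatrix_t, Matrix.submatrix_id_id]
  have E5 : Qblk n N Q Γ i = (Qblk n N Q Γ (σ i)).submatrix (pe N n σ) (pe N n σ) :=
    (Qblk_submatrix σ i).symm
  simp only [riccatiRHS, Matrix.mul_assoc]
  rw [E1a, E1b, E2, E3, E4, E5]
  rfl

end Perm

section Transforms
open Set
variable {n n1 N : ℕ} {A G Q Qf Γ Γf : Matrix (Fin n) (Fin n) ℝ}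
    {B : Matrix (Fin n) (Fin n1) ℝ} {R : Matrix (Fin n1) (Fin n1) ℝ} {T : ℝ}

lemma isRiccatiSol_transpose (hQ : Qᵀ = Q) (hQf : Qfᵀ = Qf) (hR : Rᵀ = R)
    {P : Fin N → ℝ → Matrix (Fin N × Fin n) (Fin N × Fin n) ℝ}
    (hP : IsRiccatiSol n n1 N A G Q Qf Γ Γf B R 0 T P) :
    IsRiccatiSol n n1 N A G Q Qf Γ Γf B R 0 T (fun i t => (P i t)ᵀ) := by
  constructor
  · intro i t ht p q
    have hval : riccatiRHS n n1 N A G Q Γ B R (fun k => (P k t)ᵀ) i p q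
        = riccatiRHS n n1 N A G Q Γ B R (fun k => P k t) i q p := by
      rw [riccatiRHS_transpose hQ hR]; rfl
    rw [hval]
    exact hP.1 i t ht q p
  · intro i
    funext p q
    show (P i T)ᵀ p q = Qblk n N Qf Γf i p q
    rw [hP.2 i, Qblk_transpose hQf]

lemma isRiccatiSol_perm (σ : Equiv.Perm (Fin N))
    {P : Fin N → ℝ → Matrix (Fin N × Fin n) (Fin N × Fin n) ℝ}
    (hP : IsRiccatiSol n n1 N A G Q Qf Γ Γf B R 0 T P) :
    IsRiccatiSol n n1 N A G Q Qf Γ Γf B R 0 T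
      (fun i t => (P (σ i) t).submatrix (pe N n σ) (pe N n σ)) := by
  constructor
  · intro i t ht p q
    have hval : riccatiRHS n n1 N A G Q Γ B R
          (fun k => (P (σ k) t).submatrix (pe N n σ) (pe N n σ)) i p q
        = riccatiRHS n n1 N A G Q Γ B R (fun k => P k t) (σ i) (pe N n σ p) (pe N n σ q) := by
      rw [riccatiRHS_perm σ (fun k => P k t) i]; rfl
    rw [hval]
    exact hP.1 (σ i) t ht _ _
  · intro i
    funext p q
    show (P (σ i) T).submatrix (pe N n σ) (pe N n σ) p q = Qblk n N Qf Γf i p q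
    rw [hP.2 (σ i), Qblk_submatrix]
end Transforms

set_option maxHeartbeats 1600000 in
/-- If the `N`-player Riccati system has a solution on `[0, T]`, then
`P_1(t)` (the component with player index `i` satisfying `i.val = 0`), viewed as an
`N×N` array of `n×n` blocks, has the representation with `(1,1)` block `Π_1(t)`,
`(1,j)` blocks `Π_2(t)` for `j ≥ 2`, `(j,1)` blocks `Π_2(t)ᵀ`, diagonal blocks `Π_3(t)`
for `j ≥ 2`, and off-diagonal blocks `Π_4(t)` for `2 ≤ j ≠ k`, where `Π_1, Π_3, Π_4`
are symmetric. -/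
theorem riccati_P1_block_representation_four
    (n n1 N : ℕ) (hn : 0 < n) (hn1 : 0 < n1) (hN : 0 < N)
    (T : ℝ) (hT : 0 < T)
    (A G Q Qf Γ Γf : Matrix (Fin n) (Fin n) ℝ)
    (B : Matrix (Fin n) (Fin n1) ℝ) (R : Matrix (Fin n1) (Fin n1) ℝ)
    (hQ : Q.PosSemidef) (hQf : Qf.PosSemidef) (hR : R.PosDef)
    (P : Fin N → ℝ → Matrix (Fin N × Fin n) (Fin N × Fin n) ℝ)
    (hP : IsRiccatiSol n n1 N A G Q Qf Γ Γf B R 0 T P) :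
    ∃ Pi1 Pi2 Pi3 Pi4 : ℝ → Matrix (Fin n) (Fin n) ℝ,
      (∀ t ∈ Set.Icc (0:ℝ) T,
        (Pi1 t)ᵀ = Pi1 t ∧ (Pi3 t)ᵀ = Pi3 t ∧ (Pi4 t)ᵀ = Pi4 t) ∧
      (∀ t ∈ Set.Icc (0:ℝ) T, ∀ i : Fin N, i.val = 0 →
        ∀ (j k : Fin N) (r c : Fin n),
          (j.val = 0 → k.val = 0 → P i t (j, r) (k, c) = Pi1 t r c) ∧
          (j.val = 0 → k.val ≠ 0 → P i t (j, r) (k, c) = Pi2 t r c) ∧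
          (j.val ≠ 0 → k.val = 0 → P i t (j, r) (k, c) = (Pi2 t)ᵀ r c) ∧
          (j.val ≠ 0 → k.val ≠ 0 → j = k → P i t (j, r) (k, c) = Pi3 t r c) ∧
          (j.val ≠ 0 → k.val ≠ 0 → j ≠ k → P i t (j, r) (k, c) = Pi4 t r c)) := by
  have symQ : Qᵀ = Q := by
    rw [← Matrix.conjTranspose_eq_transpose_of_trivial]; exact hQ.1.eq
  have symQf : Qfᵀ = Qf := by
    rw [← Matrix.conjTranspose_eq_transpose_of_trivial]; exact hQf.1.eq
  have symR : Rᵀ = R := by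
    rw [← Matrix.conjTranspose_eq_transpose_of_trivial]; exact hR.1.eq
  set i0 : Fin N := ⟨0, hN⟩ with hi0
  set j1 : Fin N := ⟨min 1 (N - 1), by omega⟩ with hj1
  set j2 : Fin N := ⟨min 2 (N - 1), by omega⟩ with hj2
  -- symmetry of P i0 t
  have hsymm : ∀ t ∈ Set.Icc (0:ℝ) T, (P i0 t)ᵀ = P i0 t := by
    intro t ht
    exact riccati_unique (fun i t => (P i t)ᵀ) P
      (isRiccatiSol_transpose symQ symQf symR hP) hP ht i0
  -- permutation invariance of P i0 t
  have hperm : ∀ σ : Equiv.Perm (Fin N), σ i0 = i0 → ∀ t ∈ Set.Icc (0:ℝ) T,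
      ∀ p q : Fin N × Fin n, P i0 t p q = P i0 t (σ p.1, p.2) (σ q.1, q.2) := by
    intro σ hσ t ht p q
    have h := riccati_unique (fun i t => (P (σ i) t).submatrix (pe N n σ) (pe N n σ)) P
      (isRiccatiSol_perm σ hP) hP ht i0
    have h2 := congrFun (congrFun h p) q
    rw [← h2]
    show P (σ i0) t (σ p.1, p.2) (σ q.1, q.2) = _
    rw [hσ]
  refine ⟨fun t => Matrix.of fun r c => P i0 t (i0, r) (i0, c),
        fun t => Matrix.of fun r c => P i0 t (i0, r) (j1, c),
        fun t => Matrix.of fun r c => P i0 t (j1, r) (j1, c),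
        fun t => Matrix.of fun r c => P i0 t (j1, r) (j2, c), ?_, ?_⟩
  · -- symmetry statements
    intro t ht
    have hs := hsymm t ht
    have hdiag : ∀ a : Fin N, ∀ r c, P i0 t (a, c) (a, r) = P i0 t (a, r) (a, c) := by
      intro a r c
      calc P i0 t (a, c) (a, r) = (P i0 t)ᵀ (a, r) (a, c) := rfl
        _ = P i0 t (a, r) (a, c) := by rw [hs]
    refine ⟨?_, ?_, ?_⟩
    · ext r c; exact hdiag i0 r c
    · ext r c; exact hdiag j1 r c
    · by_cases h12 : j1 = j2
      · rw [← h12]; ext r c; exact hdiag j1 r c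
      · have hN3 : 3 ≤ N := by
          by_contra hc
          exact h12 (Fin.ext (by simp only [hj1, hj2, Fin.val_mk]; omega))
        have hv1 : (j1 : Fin N).val = 1 := by simp only [hj1, Fin.val_mk]; omega
        have hv2 : (j2 : Fin N).val = 2 := by simp only [hj2, Fin.val_mk]; omega
        have h10 : j1 ≠ i0 := by intro h; rw [h] at hv1; simp [hi0] at hv1
        have h20 : j2 ≠ i0 := by intro h; rw [h] at hv2; simp [hi0] at hv2
        set σ := Equiv.swap j1 j2 with hσdef
        have hσ0 : σ i0 = i0 := Equiv.swap_apply_of_ne_of_ne (Ne.symm h10) (Ne.symm h20)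
        ext r c
        show P i0 t (j1, c) (j2, r) = P i0 t (j1, r) (j2, c)
        calc P i0 t (j1, c) (j2, r) = (P i0 t)ᵀ (j2, r) (j1, c) := rfl
          _ = P i0 t (j2, r) (j1, c) := by rw [hs]
          _ = P i0 t (σ j2, r) (σ j1, c) := hperm σ hσ0 t ht (j2, r) (j1, c)
          _ = P i0 t (j1, r) (j2, c) := by rw [Equiv.swap_apply_left, Equiv.swap_apply_right]
  · -- block structure
    intro t ht i hi j k r c
    have hii : i = i0 := Fin.ext hi
    subst hii
    refine ⟨?_, ?_, ?_, ?_, ?_⟩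
    · intro hj hk
      have : j = i0 := Fin.ext hj
      have hk' : k = i0 := Fin.ext hk
      rw [this, hk']; rfl
    · intro hj hk
      have hj' : j = i0 := Fin.ext hj
      have hN2 : 2 ≤ N := by have := k.isLt; omega
      have hv1 : (j1 : Fin N).val = 1 := by simp only [hj1, Fin.val_mk]; omega
      have h10 : j1 ≠ i0 := by intro h; rw [h] at hv1; simp [hi0] at hv1
      have hk0 : k ≠ i0 := by intro h; rw [h] at hk; exact hk rfl
      set σ := Equiv.swap k j1 with hσdef
      have hσ0 : σ i0 = i0 :=
        Equiv.swap_apply_of_ne_of_ne (Ne.symm hk0) (Ne.symm h10)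
      have := hperm σ hσ0 t ht (j, r) (k, c)
      rw [this]
      show P i0 t (σ j, r) (σ k, c) = P i0 t (i0, r) (j1, c)
      rw [hj', hσ0, Equiv.swap_apply_left]
    · intro hj hk
      have hk' : k = i0 := Fin.ext hk
      have hN2 : 2 ≤ N := by have := j.isLt; omega
      have hv1 : (j1 : Fin N).val = 1 := by simp only [hj1, Fin.val_mk]; omega
      have h10 : j1 ≠ i0 := by intro h; rw [h] at hv1; simp [hi0] at hv1
      have hj0 : j ≠ i0 := by intro h; rw [h] at hj; exact hj rfl
      -- transpose first
      have hs := hsymm t ht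
      have step1 : P i0 t (j, r) (k, c) = P i0 t (k, c) (j, r) := by
        calc P i0 t (j, r) (k, c) = (P i0 t)ᵀ (k, c) (j, r) := rfl
          _ = P i0 t (k, c) (j, r) := by rw [hs]
      rw [step1, hk']
      set σ := Equiv.swap j j1 with hσdef
      have hσ0 : σ i0 = i0 :=
        Equiv.swap_apply_of_ne_of_ne (Ne.symm hj0) (Ne.symm h10)
      have := hperm σ hσ0 t ht (i0, c) (j, r)
      rw [this]
      show P i0 t (σ i0, c) (σ j, r) = _
      rw [hσ0, Equiv.swap_apply_left]
      rfl
    · intro hj hk hjk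
      subst hjk
      have hN2 : 2 ≤ N := by have := j.isLt; omega
      have hv1 : (j1 : Fin N).val = 1 := by simp only [hj1, Fin.val_mk]; omega
      have h10 : j1 ≠ i0 := by intro h; rw [h] at hv1; simp [hi0] at hv1
      have hj0 : j ≠ i0 := by intro h; rw [h] at hj; exact hj rfl
      set σ := Equiv.swap j j1 with hσdef
      have hσ0 : σ i0 = i0 :=
        Equiv.swap_apply_of_ne_of_ne (Ne.symm hj0) (Ne.symm h10)
      have := hperm σ hσ0 t ht (j, r) (j, c)
      rw [this]
      show P i0 t (σ j, r) (σ j, c) = _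
      rw [Equiv.swap_apply_left]
      rfl
    · intro hj hk hjk
      have hj0 : j ≠ i0 := by intro h; rw [h] at hj; exact hj rfl
      have hk0 : k ≠ i0 := by intro h; rw [h] at hk; exact hk rfl
      have hN3 : 3 ≤ N := by
        have h1 := j.isLt; have h2 := k.isLt
        have : j.val ≠ k.val := fun h => hjk (Fin.ext h)
        omega
      have hv1 : (j1 : Fin N).val = 1 := by simp only [hj1, Fin.val_mk]; omega
      have hv2 : (j2 : Fin N).val = 2 := by simp only [hj2, Fin.val_mk]; omega
      have h10 : j1 ≠ i0 := by intro h; rw [h] at hv1; simp [hi0] at hv1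
      have h20 : j2 ≠ i0 := by intro h; rw [h] at hv2; simp [hi0] at hv2
      have h12 : j1 ≠ j2 := by intro h; rw [h] at hv1; omega
      set τ := Equiv.swap j j1 with hτdef
      set k' := τ k with hk'def
      have hk'0 : k' ≠ i0 := by
        by_cases hkj1 : k = j1
        · rw [hk'def, hkj1, hτdef, Equiv.swap_apply_right]; exact hj0
        · rw [hk'def, hτdef, Equiv.swap_apply_of_ne_of_ne (Ne.symm hjk) hkj1]
          exact hk0
      have hk'j1 : k' ≠ j1 := by
        intro h
        have : k = τ j1 := by
          have := congrArg τ h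
          rwa [hk'def, Equiv.swap_apply_self] at this
        rw [hτdef, Equiv.swap_apply_right] at this
        exact hjk this.symm
      set υ := Equiv.swap k' j2 with hυdef
      set σ := τ.trans υ with hσdef
      have hσ0 : σ i0 = i0 := by
        show υ (τ i0) = i0
        rw [hτdef, Equiv.swap_apply_of_ne_of_ne (Ne.symm hj0)
          (Ne.symm h10)]
        exact Equiv.swap_apply_of_ne_of_ne (Ne.symm hk'0)
          (Ne.symm h20)
      have hσj : σ j = j1 := by
        show υ (τ j) = j1
        rw [hτdef, Equiv.swap_apply_left]
        exact Equiv.swap_apply_of_ne_of_ne (Ne.symm hk'j1)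
          h12
      have hσk : σ k = j2 := by
        show υ (τ k) = j2
        rw [← hk'def, hυdef, Equiv.swap_apply_left]
      have := hperm σ hσ0 t ht (j, r) (k, c)
      rw [this]
      show P i0 t (σ j, r) (σ k, c) = _
      rw [hσj, hσk]
      rfl
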